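/- Let m ≥ 3, let P be a symmetric 2-index array on ℝ^m and let v ∈ ℝ^m. Then Σ_{i,j,k} P_{ij} v_k D(P,v)_{ijk} = ((m−2)/2)·Σ_{i,j,k} (D(P,v)_{ijk})². -/
import Mathlib


/-- The Kronecker delta on `Fin m`, regarded as a real 2-index array. -/
def kdelta (m : ℕ) (i j : Fin m) : ℝ := if i = j then 1 else 0

/-- The 3-index array `D(P,v)` associated with a 2-index array `P` and a vector `v`:
`D(P,v)_{ijk} = (1/(m−2))·[ v_k P_{ij} − v_j P_{ik}
  + (1/(m−1))·Σ_l v_l (P_{lk}δ_{ij} − P_{lj}δ_{ik})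
  − ((Σ_l P_{ll})/(m−1))·(v_kδ_{ij} − v_jδ_{ik}) ]`. -/
noncomputable def Dt (m : ℕ) (P : Fin m → Fin m → ℝ) (v : Fin m → ℝ)
    (i j k : Fin m) : ℝ :=
  (1 / ((m : ℝ) - 2)) *
    (v k * P i j - v j * P i k
      + (1 / ((m : ℝ) - 1)) * ∑ l, v l * (P l k * kdelta m i j - P l j * kdelta m i k)
      - ((∑ l, P l l) / ((m : ℝ) - 1)) * (v k * kdelta m i j - v j * kdelta m i k))


lemma Dt_skew (m : ℕ) (P : Fin m → Fin m → ℝ) (v : Fin m → ℝ) (i j k : Fin m) :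
    Dt m P v i k j = - Dt m P v i j k := by
  unfold Dt
  have h : (∑ l, v l * (P l j * kdelta m i k - P l k * kdelta m i j))
      = - ∑ l, v l * (P l k * kdelta m i j - P l j * kdelta m i k) := by
    rw [← Finset.sum_neg_distrib]
    exact Finset.sum_congr rfl (fun l _ => by ring)
  rw [h]; ring

lemma Dt_trace (m : ℕ) (hm : 3 ≤ m) (P : Fin m → Fin m → ℝ) (v : Fin m → ℝ) (k : Fin m) :
    ∑ i, Dt m P v i i k = 0 := by
  have hm1 : ((m:ℝ) - 1) ≠ 0 := by
    have : (3:ℝ) ≤ (m:ℝ) := by exact_mod_cast hm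
    intro h; linarith
  unfold Dt
  rw [← Finset.mul_sum]
  rw [mul_eq_zero]; right
  have hin : ∀ i : Fin m, (v k * P i i - v i * P i k
      + (1 / ((m : ℝ) - 1)) * ∑ l, v l * (P l k * kdelta m i i - P l i * kdelta m i k)
      - ((∑ l, P l l) / ((m : ℝ) - 1)) * (v k * kdelta m i i - v i * kdelta m i k))
      = v k * P i i - v i * P i k
      + ((1 / ((m : ℝ) - 1)) * (∑ l, v l * P l k)
          - (1 / ((m : ℝ) - 1)) * (kdelta m i k * ∑ l, v l * P l i))
      - (((∑ l, P l l) / ((m : ℝ) - 1)) * v k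
          - ((∑ l, P l l) / ((m : ℝ) - 1)) * (v i * kdelta m i k)) := by
    intro i
    have h2 : (∑ l, v l * (P l k * kdelta m i i - P l i * kdelta m i k))
        = (∑ l, v l * P l k) - kdelta m i k * ∑ l, v l * P l i := by
      rw [Finset.mul_sum, ← Finset.sum_sub_distrib]
      refine Finset.sum_congr rfl (fun l _ => ?_)
      by_cases h : i = k <;> simp [kdelta, h] <;> ring
    rw [h2]
    by_cases h : i = k <;> simp [kdelta, h] <;> ring
  rw [Finset.sum_congr rfl (fun i _ => hin i)]
  have hd1 : ∑ i : Fin m, kdelta m i k * ∑ l, v l * P l i = ∑ l, v l * P l k := by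
    simp [kdelta, Finset.sum_ite_eq]
  have hd2 : ∑ i : Fin m, v i * kdelta m i k = v k := by
    simp [kdelta, Finset.sum_ite_eq]
  simp only [Finset.sum_sub_distrib, Finset.sum_add_distrib, ← Finset.mul_sum,
    Finset.sum_const, Finset.card_univ, Fintype.card_fin, nsmul_eq_mul]
  
  field_simp
  rw [hd1, hd2]
  ring

/-- Contracting `D(P,v)` against `P_{ij} v_k` produces `((m−2)/2)` times its squared
norm: `Σ_{i,j,k} P_{ij} v_k D(P,v)_{ijk} = ((m−2)/2)·Σ_{i,j,k} (D(P,v)_{ijk})²`. -/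
theorem contraction_Dt_eq_normsq (m : ℕ) (hm : 3 ≤ m) (P : Fin m → Fin m → ℝ)
    (hP : ∀ i j, P i j = P j i) (v : Fin m → ℝ) :
    (∑ i, ∑ j, ∑ k, P i j * v k * Dt m P v i j k) =
      (((m : ℝ) - 2) / 2) * ∑ i, ∑ j, ∑ k, (Dt m P v i j k) ^ 2 := by
  have hm3 : (3:ℝ) ≤ (m:ℝ) := by exact_mod_cast hm
  have hm1 : ((m:ℝ) - 1) ≠ 0 := by intro h; linarith
  have hm2 : ((m:ℝ) - 2) ≠ 0 := by intro h; linarith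
  set f : Fin m → ℝ := fun k =>
    (1/((m:ℝ)-1)) * (∑ l, v l * P l k) - ((∑ l, P l l)/((m:ℝ)-1)) * v k with hf
  have hN : ∀ i j k, ((m:ℝ)-2) * Dt m P v i j k
      = v k * P i j - v j * P i k + kdelta m i j * f k - kdelta m i k * f j := by
    intro i j k
    have hsum : (∑ l, v l * (P l k * kdelta m i j - P l j * kdelta m i k))
        = kdelta m i j * (∑ l, v l * P l k) - kdelta m i k * (∑ l, v l * P l j) := by
      rw [Finset.mul_sum, Finset.mul_sum, ← Finset.sum_sub_distrib]
      exact Finset.sum_congr rfl (fun l _ => by ring)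
    unfold Dt
    rw [hsum, hf]
    field_simp
    ring
  have expand : ∀ i j k : Fin m, ((m:ℝ)-2) * (Dt m P v i j k)^2
      = P i j * v k * Dt m P v i j k - v j * P i k * Dt m P v i j k
        + kdelta m i j * f k * Dt m P v i j k - kdelta m i k * f j * Dt m P v i j k := by
    intro i j k
    have h : ((m:ℝ)-2) * (Dt m P v i j k)^2
        = (((m:ℝ)-2) * Dt m P v i j k) * Dt m P v i j k := by ring
    rw [h, hN i j k]; ring
  have hT2 : (∑ i, ∑ j, ∑ k, v j * P i k * Dt m P v i j k)
      = - ∑ i, ∑ j, ∑ k, P i j * v k * Dt m P v i j k := by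
    rw [← Finset.sum_neg_distrib]
    refine Finset.sum_congr rfl fun i _ => ?_
    rw [Finset.sum_comm, ← Finset.sum_neg_distrib]
    refine Finset.sum_congr rfl fun j _ => ?_
    rw [← Finset.sum_neg_distrib]
    refine Finset.sum_congr rfl fun k _ => ?_
    rw [Dt_skew]; ring
  have hT3 : (∑ i, ∑ j, ∑ k, kdelta m i j * f k * Dt m P v i j k) = 0 := by
    have step : ∀ i : Fin m, (∑ j, ∑ k, kdelta m i j * f k * Dt m P v i j k)
        = ∑ k, f k * Dt m P v i i k := by
      intro i
      have h : ∀ j, (∑ k, kdelta m i j * f k * Dt m P v i j k)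
          = if i = j then (∑ k, f k * Dt m P v i j k) else 0 := by
        intro j; by_cases h : i = j <;> simp [kdelta, h, mul_comm]
      rw [Finset.sum_congr rfl (fun j _ => h j), Finset.sum_ite_eq]
      simp
    rw [Finset.sum_congr rfl (fun i _ => step i), Finset.sum_comm]
    refine Finset.sum_eq_zero fun k _ => ?_
    rw [← Finset.mul_sum, Dt_trace m hm P v k, mul_zero]
  have hT4 : (∑ i, ∑ j, ∑ k, kdelta m i k * f j * Dt m P v i j k) = 0 := by
    have step : ∀ i : Fin m, (∑ j, ∑ k, kdelta m i k * f j * Dt m P v i j k)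
        = ∑ j, f j * (- Dt m P v i i j) := by
      intro i
      refine Finset.sum_congr rfl fun j _ => ?_
      have h : ∀ k, kdelta m i k * f j * Dt m P v i j k
          = if i = k then f j * Dt m P v i j k else 0 := by
        intro k; by_cases h : i = k <;> simp [kdelta, h]
      rw [Finset.sum_congr rfl (fun k _ => h k), Finset.sum_ite_eq]
      simp [Dt_skew m P v i i j]
    rw [Finset.sum_congr rfl (fun i _ => step i), Finset.sum_comm]
    refine Finset.sum_eq_zero fun j _ => ?_
    simp only [mul_neg, ← Finset.mul_sum, Finset.sum_neg_distrib]
    rw [Dt_trace m hm P v j]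
    simp
  have key : ((m:ℝ)-2) * (∑ i, ∑ j, ∑ k, (Dt m P v i j k)^2)
      = 2 * ∑ i, ∑ j, ∑ k, P i j * v k * Dt m P v i j k := by
    calc ((m:ℝ)-2) * (∑ i, ∑ j, ∑ k, (Dt m P v i j k)^2)
        = ∑ i, ∑ j, ∑ k, ((m:ℝ)-2) * (Dt m P v i j k)^2 := by
          simp only [Finset.mul_sum]
      _ = ∑ i, ∑ j, ∑ k, (P i j * v k * Dt m P v i j k - v j * P i k * Dt m P v i j k
            + kdelta m i j * f k * Dt m P v i j k - kdelta m i k * f j * Dt m P v i j k) := by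
          exact Finset.sum_congr rfl fun i _ => Finset.sum_congr rfl fun j _ =>
            Finset.sum_congr rfl fun k _ => expand i j k
      _ = (∑ i, ∑ j, ∑ k, P i j * v k * Dt m P v i j k)
            - (∑ i, ∑ j, ∑ k, v j * P i k * Dt m P v i j k)
            + (∑ i, ∑ j, ∑ k, kdelta m i j * f k * Dt m P v i j k)
            - (∑ i, ∑ j, ∑ k, kdelta m i k * f j * Dt m P v i j k) := by
          simp only [Finset.sum_add_distrib, Finset.sum_sub_distrib]
      _ = 2 * ∑ i, ∑ j, ∑ k, P i j * v k * Dt m P v i j k := by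
          rw [hT2, hT3, hT4]; ring
  linarith
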